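/- arXiv:1601.00511 — 4 statements merged into one kernel-verified Lean document; each statement's English description precedes it below -/
import Mathlib

section
/- Let $p_n$ be the average characteristic polynomial of a polynomial ensemble. Then $p_n$ satisfies the orthogonality conditions $\int_{\mathbb{R}} p_n(x) f_j(x)\,dx = 0$ for $j = 0,\dots,n-1$. -/
open MeasureTheory Polynomial

open scoped ENNReal NNReal

lemma prodPairs (m : ℕ) (g : Fin m → Fin m → ℝ) :
    ∏ p ∈ Finset.univ.filter (fun p : Fin m × Fin m => p.1 < p.2), g p.1 p.2
      = ∏ i, ∏ j ∈ Finset.Ioi i, g i j := by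
  rw [Finset.prod_filter, ← Finset.univ_product_univ, Finset.prod_product]
  refine Finset.prod_congr rfl fun i _ => ?_
  rw [← Finset.prod_filter]
  congr 1
  ext j
  simp

lemma consDelta (n : ℕ) (x : ℝ) (y : Fin n → ℝ) :
    (∏ i, ∏ j ∈ Finset.Ioi i, ((Fin.cons x y : Fin (n+1) → ℝ) j - (Fin.cons x y : Fin (n+1) → ℝ) i))
      = (∏ i, (y i - x)) * ∏ i, ∏ j ∈ Finset.Ioi i, (y j - y i) := by
  rw [Fin.prod_univ_succ]
  congr 1
  · rw [Fin.prod_Ioi_zero]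
    simp
  · refine Finset.prod_congr rfl fun i _ => ?_
    rw [Fin.prod_Ioi_succ]
    simp

lemma keyExpand (n : ℕ) (f : Fin n → ℝ → ℝ) (x : ℝ) (y : Fin n → ℝ) :
    (∏ p ∈ Finset.univ.filter (fun p : Fin n × Fin n => p.1 < p.2), (y p.2 - y p.1)) *
      Matrix.det (Matrix.of fun j k : Fin n => f k (y j)) * (∏ i, (x - y i))
    = (-1 : ℝ)^n * ∑ σ : Equiv.Perm (Fin (n+1)), ∑ τ : Equiv.Perm (Fin n),
        ((Equiv.Perm.sign σ : ℤ) : ℝ) * ((Equiv.Perm.sign τ : ℤ) : ℝ) *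
          x ^ ((σ 0 : Fin (n+1)) : ℕ) *
          ∏ i : Fin n, (y i ^ ((σ i.succ : Fin (n+1)) : ℕ) * f (τ i) (y i)) := by
  have h1 : (∏ i, (x - y i)) = (-1 : ℝ)^n * ∏ i, (y i - x) := by
    rw [Finset.prod_congr rfl (fun i (_ : i ∈ Finset.univ) =>
        show x - y i = (-1) * (y i - x) by ring),
      Finset.prod_mul_distrib, Finset.prod_const, Finset.card_univ, Fintype.card_fin]
  have h2 : (∏ p ∈ Finset.univ.filter (fun p : Fin n × Fin n => p.1 < p.2), (y p.2 - y p.1)) *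
      (∏ i, (y i - x)) = Matrix.det (Matrix.vandermonde (Fin.cons x y)) := by
    rw [Matrix.det_vandermonde, consDelta, prodPairs n (fun i j => y j - y i)]
    ring
  have h3 : Matrix.det (Matrix.vandermonde (Fin.cons x y)) =
      ∑ σ : Equiv.Perm (Fin (n+1)), ((Equiv.Perm.sign σ : ℤ) : ℝ) *
        (x ^ ((σ 0 : Fin (n+1)) : ℕ) * ∏ i : Fin n, y i ^ ((σ i.succ : Fin (n+1)) : ℕ)) := by
    rw [← Matrix.det_transpose, Matrix.det_apply']
    refine Finset.sum_congr rfl fun σ _ => ?_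
    congr 1
    rw [Fin.prod_univ_succ]
    simp [Matrix.vandermonde]
  have h4 : Matrix.det (Matrix.of fun j k : Fin n => f k (y j)) =
      ∑ τ : Equiv.Perm (Fin n), ((Equiv.Perm.sign τ : ℤ) : ℝ) * ∏ i, f (τ i) (y i) := by
    rw [← Matrix.det_transpose, Matrix.det_apply']
    simp [Matrix.transpose_apply]
  calc (∏ p ∈ Finset.univ.filter (fun p : Fin n × Fin n => p.1 < p.2), (y p.2 - y p.1)) *
      Matrix.det (Matrix.of fun j k : Fin n => f k (y j)) * (∏ i, (x - y i))
      = (-1 : ℝ)^n * (((∏ p ∈ Finset.univ.filter (fun p : Fin n × Fin n => p.1 < p.2),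
          (y p.2 - y p.1)) * (∏ i, (y i - x))) *
          Matrix.det (Matrix.of fun j k : Fin n => f k (y j))) := by
        rw [h1]; ring
    _ = _ := by
        rw [h2, h3, h4, Finset.sum_mul_sum]
        congr 1
        refine Finset.sum_congr rfl fun σ _ => Finset.sum_congr rfl fun τ _ => ?_
        rw [Finset.prod_mul_distrib]
        ring

lemma sumZero (n : ℕ) (mg : ℕ → Fin n → ℝ) (j : Fin n) :
    ∑ σ : Equiv.Perm (Fin (n+1)), ∑ τ : Equiv.Perm (Fin n),
      ((Equiv.Perm.sign σ : ℤ) : ℝ) * ((Equiv.Perm.sign τ : ℤ) : ℝ) *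
        (∏ i : Fin n, mg ((σ i.succ : Fin (n+1)) : ℕ) (τ i)) * mg ((σ 0 : Fin (n+1)) : ℕ) j
      = 0 := by
  rw [Finset.sum_comm]
  refine Finset.sum_eq_zero fun τ _ => ?_
  have hdet : (Matrix.of fun (a i : Fin (n+1)) =>
      mg (a : ℕ) ((Fin.cons j (fun i => τ i) : Fin (n+1) → Fin n) i)).det = 0 := by
    refine Matrix.det_zero_of_column_eq (i := 0) (j := (τ.symm j).succ)
      (Fin.succ_ne_zero _).symm fun a => ?_
    simp
  have hsum : ∑ σ : Equiv.Perm (Fin (n+1)),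
      ((Equiv.Perm.sign σ : ℤ) : ℝ) * ((Equiv.Perm.sign τ : ℤ) : ℝ) *
        (∏ i : Fin n, mg ((σ i.succ : Fin (n+1)) : ℕ) (τ i)) * mg ((σ 0 : Fin (n+1)) : ℕ) j
      = ((Equiv.Perm.sign τ : ℤ) : ℝ) * (Matrix.of fun (a i : Fin (n+1)) =>
          mg (a : ℕ) ((Fin.cons j (fun i => τ i) : Fin (n+1) → Fin n) i)).det := by
    rw [Matrix.det_apply', Finset.mul_sum]
    refine Finset.sum_congr rfl fun σ _ => ?_
    rw [Fin.prod_univ_succ]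
    simp only [Matrix.of_apply, Fin.cons_zero, Fin.cons_succ]
    ring
  rw [hsum, hdet, mul_zero]

/-- The average characteristic polynomial `p_n` of a polynomial ensemble satisfies
the orthogonality conditions `∫ p_n(x) f_j(x) dx = 0` for `j = 0, …, n-1`. -/
theorem stmt1 (n : ℕ) (hn : 0 < n) (f : Fin n → ℝ → ℝ)
    (hf : ∀ j, Integrable (f j))
    (hmomf : ∀ j, ∀ k : ℕ, Integrable (fun x : ℝ => |x| ^ k * |f j x|))
    (Z : ℝ) (hZ : 0 < Z)
    (ρ : (Fin n → ℝ) → ℝ)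
    (hρ : ∀ x, ρ x = (1 / Z) *
      (∏ p ∈ Finset.univ.filter (fun p : Fin n × Fin n => p.1 < p.2), (x p.2 - x p.1)) *
      Matrix.det (Matrix.of fun j k : Fin n => f k (x j)))
    (hρ0 : ∀ x, 0 ≤ ρ x)
    (μ : Measure (Fin n → ℝ))
    (hμ : μ = (volume : Measure (Fin n → ℝ)).withDensity (fun x => ENNReal.ofReal (ρ x)))
    (hprob : IsProbabilityMeasure μ)
    (hmom : ∀ k : Fin n → ℕ, Integrable (fun x => ∏ j, x j ^ k j) μ)
    (p : Polynomial ℝ)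
    (hp : ∀ z : ℝ, p.eval z = ∫ x, (∏ j, (z - x j)) ∂μ) :
    ∀ j : Fin n, ∫ x : ℝ, p.eval x * f j x = 0 := by
  intro j
  -- integrability of moment functions
  have hG : ∀ (a : ℕ) (b : Fin n), Integrable (fun t : ℝ => t ^ a * f b t) := by
    intro a b
    have hm : AEStronglyMeasurable (fun t : ℝ => t ^ a * f b t) volume :=
      ((continuous_pow a).aestronglyMeasurable).mul (hf b).1
    refine (hmomf b a).mono hm (Filter.Eventually.of_forall fun t => ?_)
    simp [Real.norm_eq_abs, abs_mul, abs_pow, abs_abs, le_refl]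
  set mg : ℕ → Fin n → ℝ := fun a b => ∫ t : ℝ, t ^ a * f b t with hmg
  -- a.e. measurability of the density
  have hfm : ∀ b : Fin n, ∃ g : ℝ → ℝ, Measurable g ∧ f b =ᵐ[volume] g := fun b =>
    ⟨(hf b).1.mk _, (hf b).1.stronglyMeasurable_mk.measurable, (hf b).1.ae_eq_mk⟩
  choose g hgmeas hgae using hfm
  have hρae : AEMeasurable ρ (volume : Measure (Fin n → ℝ)) := by
    have hmeas' : Measurable (fun x : Fin n → ℝ => (1 / Z) *
        (∏ p ∈ Finset.univ.filter (fun p : Fin n × Fin n => p.1 < p.2), (x p.2 - x p.1)) *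
        Matrix.det (Matrix.of fun j k : Fin n => g k (x j))) := by
      refine Measurable.mul (measurable_const.mul ?_) ?_
      · exact Finset.measurable_prod _ fun q _ =>
          (measurable_pi_apply q.2).sub (measurable_pi_apply q.1)
      · simp only [Matrix.det_apply']
        refine Finset.measurable_sum _ fun σ _ => Measurable.const_mul ?_ _
        exact Finset.measurable_prod _ fun i _ => (hgmeas _).comp (measurable_pi_apply _)
    have hae : (fun x : Fin n → ℝ => (1 / Z) *
        (∏ p ∈ Finset.univ.filter (fun p : Fin n × Fin n => p.1 < p.2), (x p.2 - x p.1)) *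
        Matrix.det (Matrix.of fun j k : Fin n => g k (x j))) =ᵐ[volume] ρ := by
      have h0 : ∀ b j' : Fin n, ∀ᵐ x : Fin n → ℝ, f b (x j') = g b (x j') := by
        intro b j'
        have hnull : (volume : Measure ℝ) {t : ℝ | ¬ f b t = g b t} = 0 := by
          exact ae_iff.mp (hgae b)
        have := Measure.pi_eval_preimage_null
          (μ := fun _ : Fin n => (volume : Measure ℝ)) (i := j') hnull
        rw [ae_iff]
        rw [volume_pi]
        exact this
      have hall : ∀ᵐ x : Fin n → ℝ, ∀ b j' : Fin n, f b (x j') = g b (x j') := by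
        rw [ae_all_iff]
        intro b
        rw [ae_all_iff]
        exact h0 b
      filter_upwards [hall] with x hx
      rw [hρ x]
      congr 2
      ext j' k
      exact (hx k j').symm
    exact hmeas'.aemeasurable.congr hae
  have hρnn : AEMeasurable (fun x : Fin n → ℝ => (ρ x).toNNReal) volume :=
    measurable_real_toNNReal.comp_aemeasurable hρae
  -- express p.eval as an integral against volume
  have hpe : ∀ x : ℝ, p.eval x = ∫ y : Fin n → ℝ, ρ y * ∏ i, (x - y i) := by
    intro x
    rw [hp x, hμ]
    have hd : (fun y : Fin n → ℝ => ENNReal.ofReal (ρ y))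
        = fun y => ((ρ y).toNNReal : ℝ≥0∞) := rfl
    rw [hd, integral_withDensity_eq_integral_smul₀ hρnn]
    refine integral_congr_ae (Filter.Eventually.of_forall fun y => ?_)
    simp [NNReal.smul_def, Real.coe_toNNReal _ (hρ0 y)]
  -- expand p.eval as a finite sum of moments
  have hint : ∀ (σ : Equiv.Perm (Fin (n+1))) (τ : Equiv.Perm (Fin n)),
      Integrable (fun y : Fin n → ℝ =>
        ∏ i : Fin n, (y i ^ ((σ i.succ : Fin (n+1)) : ℕ) * f (τ i) (y i))) :=
    fun σ τ => Integrable.fintype_prod (fun i => hG _ _)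
  have hpx : ∀ x : ℝ, p.eval x =
      ∑ σ : Equiv.Perm (Fin (n+1)), ∑ τ : Equiv.Perm (Fin n),
        ((1 / Z) * (-1 : ℝ)^n * ((Equiv.Perm.sign σ : ℤ) : ℝ) * ((Equiv.Perm.sign τ : ℤ) : ℝ)
          * x ^ ((σ 0 : Fin (n+1)) : ℕ)) *
          ∏ i : Fin n, mg ((σ i.succ : Fin (n+1)) : ℕ) (τ i) := by
    intro x
    rw [hpe x]
    have hpt : ∀ y : Fin n → ℝ, ρ y * ∏ i, (x - y i) =
        ∑ σ : Equiv.Perm (Fin (n+1)), ∑ τ : Equiv.Perm (Fin n),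
          ((1 / Z) * (-1 : ℝ)^n * ((Equiv.Perm.sign σ : ℤ) : ℝ) * ((Equiv.Perm.sign τ : ℤ) : ℝ)
            * x ^ ((σ 0 : Fin (n+1)) : ℕ)) *
            ∏ i : Fin n, (y i ^ ((σ i.succ : Fin (n+1)) : ℕ) * f (τ i) (y i)) := by
      intro y
      have hk := keyExpand n f x y
      calc ρ y * ∏ i, (x - y i)
          = (1 / Z) * ((∏ p ∈ Finset.univ.filter (fun p : Fin n × Fin n => p.1 < p.2),
              (y p.2 - y p.1)) *
              Matrix.det (Matrix.of fun j k : Fin n => f k (y j)) * (∏ i, (x - y i))) := by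
            rw [hρ y]; ring
        _ = (1 / Z) * ((-1 : ℝ)^n * ∑ σ : Equiv.Perm (Fin (n+1)), ∑ τ : Equiv.Perm (Fin n),
              ((Equiv.Perm.sign σ : ℤ) : ℝ) * ((Equiv.Perm.sign τ : ℤ) : ℝ) *
                x ^ ((σ 0 : Fin (n+1)) : ℕ) *
                ∏ i : Fin n, (y i ^ ((σ i.succ : Fin (n+1)) : ℕ) * f (τ i) (y i))) := by
            rw [hk]
        _ = _ := by
            rw [← mul_assoc, Finset.mul_sum]
            refine Finset.sum_congr rfl fun σ _ => ?_
            rw [Finset.mul_sum]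
            refine Finset.sum_congr rfl fun τ _ => ?_
            ring
    rw [integral_congr_ae (Filter.Eventually.of_forall hpt)]
    rw [integral_finset_sum _ (fun σ _ =>
      integrable_finset_sum _ (fun τ _ => (hint σ τ).const_mul _))]
    refine Finset.sum_congr rfl fun σ _ => ?_
    rw [integral_finset_sum _ (fun τ _ => (hint σ τ).const_mul _)]
    refine Finset.sum_congr rfl fun τ _ => ?_
    rw [integral_const_mul]
    congr 1
    exact integral_fintype_prod_eq_prod (ι := Fin n)
      (fun i t => t ^ ((σ i.succ : Fin (n+1)) : ℕ) * f (τ i) t)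
  -- final computation
  have hfin : ∀ x : ℝ, p.eval x * f j x =
      ∑ σ : Equiv.Perm (Fin (n+1)), ∑ τ : Equiv.Perm (Fin n),
        ((1 / Z) * (-1 : ℝ)^n * ((Equiv.Perm.sign σ : ℤ) : ℝ) * ((Equiv.Perm.sign τ : ℤ) : ℝ)
          * ∏ i : Fin n, mg ((σ i.succ : Fin (n+1)) : ℕ) (τ i)) *
          (x ^ ((σ 0 : Fin (n+1)) : ℕ) * f j x) := by
    intro x
    rw [hpx x, Finset.sum_mul]
    refine Finset.sum_congr rfl fun σ _ => ?_
    rw [Finset.sum_mul]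
    refine Finset.sum_congr rfl fun τ _ => ?_
    ring
  rw [integral_congr_ae (Filter.Eventually.of_forall hfin)]
  rw [integral_finset_sum _ (fun σ _ =>
    integrable_finset_sum _ (fun τ _ => ((hG _ j).const_mul _)))]
  have hσ : ∀ σ : Equiv.Perm (Fin (n+1)),
      (∫ x : ℝ, ∑ τ : Equiv.Perm (Fin n),
        ((1 / Z) * (-1 : ℝ)^n * ((Equiv.Perm.sign σ : ℤ) : ℝ) * ((Equiv.Perm.sign τ : ℤ) : ℝ)
          * ∏ i : Fin n, mg ((σ i.succ : Fin (n+1)) : ℕ) (τ i)) *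
          (x ^ ((σ 0 : Fin (n+1)) : ℕ) * f j x))
      = ((1 / Z) * (-1 : ℝ)^n) * ∑ τ : Equiv.Perm (Fin n),
        ((Equiv.Perm.sign σ : ℤ) : ℝ) * ((Equiv.Perm.sign τ : ℤ) : ℝ)
          * (∏ i : Fin n, mg ((σ i.succ : Fin (n+1)) : ℕ) (τ i)) *
            mg ((σ 0 : Fin (n+1)) : ℕ) j := by
    intro σ
    rw [integral_finset_sum _ (fun τ _ => ((hG _ j).const_mul _))]
    rw [Finset.mul_sum]
    refine Finset.sum_congr rfl fun τ _ => ?_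
    rw [integral_const_mul]
    rw [show (∫ x : ℝ, x ^ ((σ 0 : Fin (n+1)) : ℕ) * f j x)
      = mg ((σ 0 : Fin (n+1)) : ℕ) j from rfl]
    ring
  rw [Finset.sum_congr rfl (fun σ (_ : σ ∈ Finset.univ) => hσ σ), ← Finset.mul_sum,
    sumZero n mg j, mul_zero]
end

section
/- Let $K \subset \mathbb{R}$ be compact, let $r > \max\{|w| : w \in K\}$, and let $(\mu_n)$ be a sequence of probability measures supported in $K$ converging weakly to a probability measure $\mu$ supported in $K$. Then the functions $f_n(z) = \int \log(1 - s/z)\, d(\mu_n - \mu)(s)$ converge to $0$ uniformly on $\{z \in \mathbb{C} : |z| > r\}$. -/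
open MeasureTheory Filter

lemma logTaylor_neg_eq (N : ℕ) (w : ℂ) :
    Complex.logTaylor (N + 1) (-w) = -∑ k ∈ Finset.range N, w ^ (k + 1) / (k + 1) := by
  induction N with
  | zero => simp [Complex.logTaylor_succ, Complex.logTaylor_zero]
  | succ N ih =>
    rw [Complex.logTaylor_succ]
    simp only [Pi.add_apply, ih, Finset.sum_range_succ]
    have h1 : ((-1 : ℂ)) ^ (N + 1 + 1) * (-w) ^ (N + 1) = -(w ^ (N + 1)) := by
      rw [show -w = (-1 : ℂ) * w from by ring, mul_pow, ← mul_assoc, ← pow_add]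
      have hodd : Odd (N + 1 + 1 + (N + 1)) := ⟨N + 1, by ring⟩
      rw [hodd.neg_one_pow]; ring
    push_cast
    rw [h1]
    ring

lemma log_tail_bound {q : ℝ} (hq1 : q < 1) {w : ℂ} (hw : ‖w‖ ≤ q) (N : ℕ) :
    ‖Complex.log (1 - w) + ∑ k ∈ Finset.range N, w ^ (k + 1) / (k + 1)‖
      ≤ q ^ (N + 1) / (1 - q) := by
  have hq0 : 0 ≤ q := le_trans (norm_nonneg w) hw
  have hw1 : ‖w‖ < 1 := lt_of_le_of_lt hw hq1
  have hw1' : ‖(-w)‖ < 1 := by rwa [norm_neg]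
  have h := Complex.norm_log_sub_logTaylor_le N hw1'
  rw [logTaylor_neg_eq, sub_neg_eq_add] at h
  have h2 : (1 : ℂ) + -w = 1 - w := by ring
  rw [h2, norm_neg] at h
  refine h.trans ?_
  have h1w : 0 < 1 - ‖w‖ := by linarith
  have h1q : 0 < 1 - q := by linarith
  calc ‖w‖ ^ (N + 1) * (1 - ‖w‖)⁻¹ / (N + 1)
      ≤ ‖w‖ ^ (N + 1) * (1 - ‖w‖)⁻¹ := by
        apply div_le_self (by positivity)
        exact_mod_cast Nat.one_le_iff_ne_zero.mpr (Nat.succ_ne_zero N)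
    _ ≤ q ^ (N + 1) * (1 - q)⁻¹ := by
        gcongr <;> first
          | exact norm_nonneg w
          | linarith
    _ = q ^ (N + 1) / (1 - q) := (div_eq_mul_inv _ _).symm

/-- If probability measures `μ_n` supported in a compact `K ⊂ ℝ` converge weakly to `μ`,
then `f_n(z) = ∫ log(1-s/z) d(μ_n - μ)(s)` converges to `0` uniformly on `{|z| > r}`,
where `r > max{|w| : w ∈ K}`. -/
theorem stmt3 (K : Set ℝ) (hK : IsCompact K) (r : ℝ) (hr : ∀ w ∈ K, |w| < r)
    (μ : ℕ → Measure ℝ) (μlim : Measure ℝ)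
    (hprob : ∀ n, IsProbabilityMeasure (μ n)) (hproblim : IsProbabilityMeasure μlim)
    (hsupp : ∀ n, μ n Kᶜ = 0) (hsupplim : μlim Kᶜ = 0)
    (hweak : ∀ g : BoundedContinuousFunction ℝ ℝ,
      Tendsto (fun n => ∫ s, g s ∂(μ n)) atTop (nhds (∫ s, g s ∂μlim))) :
    TendstoUniformlyOn
      (fun n z => (∫ s, Complex.log (1 - (s : ℂ) / z) ∂(μ n))
        - ∫ s, Complex.log (1 - (s : ℂ) / z) ∂μlim)
      0 atTop {z : ℂ | r < ‖z‖} := by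
  haveI := hproblim
  -- K is nonempty
  have hKne : K.Nonempty := by
    rcases Set.eq_empty_or_nonempty K with h | h
    · exfalso
      have h0 : μlim Set.univ = 0 := by
        have : Kᶜ = Set.univ := by rw [h, Set.compl_empty]
        rw [← this]; exact hsupplim
      rw [hproblim.measure_univ] at h0
      exact one_ne_zero h0
    · exact h
  obtain ⟨w0, hw0K, hw0max'⟩ := hK.exists_isMaxOn hKne continuous_abs.continuousOn
  have hw0max : ∀ s ∈ K, |s| ≤ |w0| := fun s hs => hw0max' hs
  set R := |w0| with hRdef
  have hR0 : 0 ≤ R := abs_nonneg _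
  have hRr : R < r := hr w0 hw0K
  have hr0 : 0 < r := lt_of_le_of_lt hR0 hRr
  set q := R / r with hqdef
  have hq0 : 0 ≤ q := div_nonneg hR0 hr0.le
  have hq1 : q < 1 := (div_lt_one hr0).mpr hRr
  have h1q : 0 < 1 - q := by linarith
  -- a.e. membership in K
  have hae : ∀ ν : Measure ℝ, ν Kᶜ = 0 → ∀ᵐ s ∂ν, s ∈ K := by
    intro ν h
    rw [ae_iff]
    exact h
  -- clamp function
  set c : ℝ → ℝ := fun s => max (-R) (min R s) with hcdef
  have hc_cont : Continuous c := continuous_const.max (continuous_const.min continuous_id)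
  have hc_eq : ∀ s ∈ K, c s = s := by
    intro s hs
    have h1 : |s| ≤ R := hw0max s hs
    obtain ⟨hl, hu⟩ := abs_le.mp h1
    simp only [hcdef]
    rw [min_eq_right hu, max_eq_right hl]
  have hc_abs : ∀ s, |c s| ≤ R := by
    intro s
    rw [abs_le]
    exact ⟨le_max_left _ _, max_le (by linarith) (min_le_left _ _)⟩
  -- bounded continuous functions giving the moments
  set g : ℕ → BoundedContinuousFunction ℝ ℝ := fun j =>
    BoundedContinuousFunction.ofNormedAddCommGroup (fun s => (c s) ^ j) (hc_cont.pow j) (R ^ j)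
      (fun s => by
        rw [Real.norm_eq_abs, abs_pow]
        exact pow_le_pow_left₀ (abs_nonneg _) (hc_abs s) j) with hgdef
  have hgapp : ∀ j s, (g j) s = (c s) ^ j := fun j s => rfl
  -- complex moments equal moment integrals of g
  have hmom : ∀ (ν : Measure ℝ), ν Kᶜ = 0 → ∀ j : ℕ,
      ∫ s, ((s : ℂ)) ^ j ∂ν = ((∫ s, (g j) s ∂ν : ℝ) : ℂ) := by
    intro ν hν j
    have h1 : ∫ s, ((s : ℂ)) ^ j ∂ν = ∫ s, (((g j) s : ℝ) : ℂ) ∂ν := by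
      apply integral_congr_ae
      filter_upwards [hae ν hν] with s hs
      rw [hgapp, hc_eq s hs]
      push_cast
      ring
    rw [h1]
    exact integral_ofReal
  -- integrability helper
  have hint : ∀ (ν : Measure ℝ), IsFiniteMeasure ν → ν Kᶜ = 0 →
      ∀ (f : ℝ → ℂ) (C : ℝ), AEStronglyMeasurable f ν → (∀ s ∈ K, ‖f s‖ ≤ C) →
      Integrable f ν := by
    intro ν hfin hν f C hmeas hb
    haveI := hfin
    refine ⟨hmeas, HasFiniteIntegral.of_bounded (C := C) ?_⟩
    filter_upwards [hae ν hν] with s hs using hb s hs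
  -- measurability of the log integrand
  have hlogmeas : ∀ (z : ℂ) (ν : Measure ℝ),
      AEStronglyMeasurable (fun s : ℝ => Complex.log (1 - (s : ℂ) / z)) ν := by
    intro z ν
    exact (Complex.measurable_log.comp
      ((continuous_const.sub (Complex.continuous_ofReal.div_const z)).measurable)).aestronglyMeasurable
  -- basic bound on s/z
  have hsz : ∀ z : ℂ, r < ‖z‖ → ∀ s ∈ K, ‖(s : ℂ) / z‖ ≤ q := by
    intro z hz s hs
    rw [norm_div, Complex.norm_real, Real.norm_eq_abs, hqdef]
    exact div_le_div₀ hR0 (hw0max s hs) hr0 hz.le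
  rw [Metric.tendstoUniformlyOn_iff]
  intro ε hε
  -- choose N
  obtain ⟨N, hN⟩ : ∃ N : ℕ, q ^ (N + 1) / (1 - q) < ε / 4 := by
    have ht := tendsto_pow_atTop_nhds_zero_of_lt_one hq0 hq1
    have h := (ht.eventually (gt_mem_nhds (show 0 < (1 - q) * (ε / 4) by positivity))).exists
    obtain ⟨N, hN⟩ := h
    refine ⟨N, ?_⟩
    have h2 : q ^ (N + 1) ≤ q ^ N := pow_le_pow_of_le_one hq0 hq1.le (Nat.le_succ N)
    rw [div_lt_iff₀ h1q]
    nlinarith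
  -- key identity for a single measure
  have key : ∀ (ν : Measure ℝ), IsProbabilityMeasure ν → ν Kᶜ = 0 →
      ∀ z : ℂ, r < ‖z‖ →
      ∫ s, Complex.log (1 - (s : ℂ) / z) ∂ν
        = (∫ s, (Complex.log (1 - (s : ℂ) / z)
            + ∑ k ∈ Finset.range N, ((s : ℂ) / z) ^ (k + 1) / (k + 1)) ∂ν)
          - ∑ k ∈ Finset.range N,
              ((∫ s, (g (k + 1)) s ∂ν : ℝ) : ℂ) / (((k : ℂ) + 1) * z ^ (k + 1)) := by
    intro ν hνp hν z hz
    haveI := hνp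
    have hz0 : z ≠ 0 := by
      intro h
      rw [h] at hz
      simp at hz
      linarith
    have ilog : Integrable (fun s : ℝ => Complex.log (1 - (s : ℂ) / z)) ν := by
      refine hint ν inferInstance hν _ (q / (1 - q)) (hlogmeas z ν) ?_
      intro s hs
      have := log_tail_bound hq1 (hsz z hz s hs) 0
      simpa using this
    have iterm : ∀ k : ℕ, Integrable (fun s : ℝ => ((s : ℂ) / z) ^ (k + 1) / ((k : ℂ) + 1)) ν := by
      intro k
      refine hint ν inferInstance hν _ (q ^ (k + 1)) ?_ ?_
      · exact (((Complex.continuous_ofReal.div_const z).pow (k + 1)).div_const _).aestronglyMeasurable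
      · intro s hs
        rw [norm_div, norm_pow]
        have hk1 : (1 : ℝ) ≤ ‖(k : ℂ) + 1‖ := by
          have : ((k : ℂ) + 1) = ((k + 1 : ℕ) : ℂ) := by push_cast; ring
          rw [this, Complex.norm_natCast]
          exact_mod_cast Nat.one_le_iff_ne_zero.mpr (Nat.succ_ne_zero k)
        calc ‖(s : ℂ) / z‖ ^ (k + 1) / ‖(k : ℂ) + 1‖
            ≤ ‖(s : ℂ) / z‖ ^ (k + 1) / 1 := by
              apply div_le_div_of_nonneg_left (by positivity) (by norm_num) hk1
          _ = ‖(s : ℂ) / z‖ ^ (k + 1) := div_one _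
          _ ≤ q ^ (k + 1) := pow_le_pow_left₀ (norm_nonneg _) (hsz z hz s hs) _
    have isum : Integrable
        (fun s : ℝ => ∑ k ∈ Finset.range N, ((s : ℂ) / z) ^ (k + 1) / ((k : ℂ) + 1)) ν :=
      integrable_finset_sum _ (fun k _ => iterm k)
    have hterm : ∀ k : ℕ,
        ∫ s, ((s : ℂ) / z) ^ (k + 1) / ((k : ℂ) + 1) ∂ν
          = ((∫ s, (g (k + 1)) s ∂ν : ℝ) : ℂ) / (((k : ℂ) + 1) * z ^ (k + 1)) := by
      intro k
      have hk0 : ((k : ℂ) + 1) ≠ 0 := Nat.cast_add_one_ne_zero k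
      have hfun : ∀ s : ℝ, ((s : ℂ) / z) ^ (k + 1) / ((k : ℂ) + 1)
          = ((s : ℂ) ^ (k + 1)) • ((((k : ℂ) + 1) * z ^ (k + 1))⁻¹) := by
        intro s
        rw [smul_eq_mul, div_pow, div_div, div_eq_mul_inv, mul_inv, mul_inv]
        ring
      simp_rw [hfun]
      rw [integral_smul_const, hmom ν hν (k + 1), smul_eq_mul, div_eq_mul_inv]
    rw [integral_add ilog isum, integral_finset_sum _ (fun k _ => iterm k)]
    simp_rw [hterm]
    ring
  -- uniform bound on the remainder integral
  have keybound : ∀ (ν : Measure ℝ), IsProbabilityMeasure ν → ν Kᶜ = 0 →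
      ∀ z : ℂ, r < ‖z‖ →
      ‖∫ s, (Complex.log (1 - (s : ℂ) / z)
          + ∑ k ∈ Finset.range N, ((s : ℂ) / z) ^ (k + 1) / (k + 1)) ∂ν‖
        ≤ q ^ (N + 1) / (1 - q) := by
    intro ν hνp hν z hz
    haveI := hνp
    have hb : ∀ᵐ (s : ℝ) ∂ν, ‖Complex.log (1 - (s : ℂ) / z)
        + ∑ k ∈ Finset.range N, ((s : ℂ) / z) ^ (k + 1) / (k + 1)‖ ≤ q ^ (N + 1) / (1 - q) := by
      filter_upwards [hae ν hν] with s hs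
      exact log_tail_bound hq1 (hsz z hz s hs) N
    calc ‖∫ s, (Complex.log (1 - (s : ℂ) / z)
          + ∑ k ∈ Finset.range N, ((s : ℂ) / z) ^ (k + 1) / (k + 1)) ∂ν‖
        ≤ (q ^ (N + 1) / (1 - q)) * (ν Set.univ).toReal :=
          norm_integral_le_of_norm_le_const hb
      _ = q ^ (N + 1) / (1 - q) := by rw [hνp.measure_univ]; simp
  -- convergence of moment differences
  set D : ℕ → ℝ := fun n => ∑ k ∈ Finset.range N,
    |(∫ s, (g (k + 1)) s ∂(μ n)) - ∫ s, (g (k + 1)) s ∂μlim| / r ^ (k + 1) with hDdef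
  have hD : Tendsto D atTop (nhds 0) := by
    have : Tendsto D atTop (nhds (∑ k ∈ Finset.range N, (0 : ℝ))) := by
      apply tendsto_finset_sum
      intro k _
      have h1 := (hweak (g (k + 1))).sub_const (∫ s, (g (k + 1)) s ∂μlim)
      rw [sub_self] at h1
      have h2 := h1.abs
      rw [abs_zero] at h2
      have h3 := h2.div_const (r ^ (k + 1))
      rw [zero_div] at h3
      exact h3
    simpa using this
  have hDev : ∀ᶠ n in atTop, D n < ε / 2 :=
    hD.eventually (gt_mem_nhds (by linarith : (0 : ℝ) < ε / 2))
  filter_upwards [hDev] with n hn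
  intro z hz
  haveI := hprob n
  rw [Pi.zero_apply, dist_eq_norm, zero_sub, norm_neg]
  rw [key (μ n) (hprob n) (hsupp n) z hz, key μlim hproblim hsupplim z hz]
  set A := ∫ s, (Complex.log (1 - (s : ℂ) / z)
      + ∑ k ∈ Finset.range N, ((s : ℂ) / z) ^ (k + 1) / (k + 1)) ∂(μ n) with hA
  set B := ∫ s, (Complex.log (1 - (s : ℂ) / z)
      + ∑ k ∈ Finset.range N, ((s : ℂ) / z) ^ (k + 1) / (k + 1)) ∂μlim with hB
  have hAb : ‖A‖ ≤ q ^ (N + 1) / (1 - q) := keybound (μ n) (hprob n) (hsupp n) z hz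
  have hBb : ‖B‖ ≤ q ^ (N + 1) / (1 - q) := keybound μlim hproblim hsupplim z hz
  have hsumb : ‖∑ k ∈ Finset.range N,
      (((∫ s, (g (k + 1)) s ∂(μ n) : ℝ) : ℂ) / (((k : ℂ) + 1) * z ^ (k + 1))
        - ((∫ s, (g (k + 1)) s ∂μlim : ℝ) : ℂ) / (((k : ℂ) + 1) * z ^ (k + 1)))‖ ≤ D n := by
    refine (norm_sum_le _ _).trans ?_
    rw [hDdef]
    apply Finset.sum_le_sum
    intro k _
    rw [div_sub_div_same]
    have hcast : (((∫ s, (g (k + 1)) s ∂(μ n) : ℝ) : ℂ)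
        - ((∫ s, (g (k + 1)) s ∂μlim : ℝ) : ℂ))
        = (((∫ s, (g (k + 1)) s ∂(μ n)) - ∫ s, (g (k + 1)) s ∂μlim : ℝ) : ℂ) := by
      push_cast; ring
    rw [hcast, norm_div, Complex.norm_real, Real.norm_eq_abs]
    have hden : ‖((k : ℂ) + 1) * z ^ (k + 1)‖ = ((k : ℝ) + 1) * ‖z‖ ^ (k + 1) := by
      rw [norm_mul, norm_pow]
      congr 1
      · have : ((k : ℂ) + 1) = ((k + 1 : ℕ) : ℂ) := by push_cast; ring
        rw [this, Complex.norm_natCast]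
        push_cast; ring
    rw [hden]
    have hrz : r ^ (k + 1) ≤ ((k : ℝ) + 1) * ‖z‖ ^ (k + 1) := by
      have h1 : r ^ (k + 1) ≤ ‖z‖ ^ (k + 1) :=
        pow_le_pow_left₀ hr0.le hz.le _
      have h2 : ‖z‖ ^ (k + 1) ≤ ((k : ℝ) + 1) * ‖z‖ ^ (k + 1) := by
        nlinarith [pow_nonneg (norm_nonneg z) (k + 1),
          Nat.cast_nonneg (α := ℝ) k]
      linarith
    exact div_le_div_of_nonneg_left (abs_nonneg _) (by positivity) hrz
  calc ‖(A - ∑ k ∈ Finset.range N,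
        ((∫ s, (g (k + 1)) s ∂(μ n) : ℝ) : ℂ) / (((k : ℂ) + 1) * z ^ (k + 1)))
      - (B - ∑ k ∈ Finset.range N,
        ((∫ s, (g (k + 1)) s ∂μlim : ℝ) : ℂ) / (((k : ℂ) + 1) * z ^ (k + 1)))‖
      = ‖(A - B) - ∑ k ∈ Finset.range N,
          (((∫ s, (g (k + 1)) s ∂(μ n) : ℝ) : ℂ) / (((k : ℂ) + 1) * z ^ (k + 1))
            - ((∫ s, (g (k + 1)) s ∂μlim : ℝ) : ℂ) / (((k : ℂ) + 1) * z ^ (k + 1)))‖ := by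
        rw [Finset.sum_sub_distrib]
        congr 1
        ring
    _ ≤ ‖A - B‖ + ‖∑ k ∈ Finset.range N,
          (((∫ s, (g (k + 1)) s ∂(μ n) : ℝ) : ℂ) / (((k : ℂ) + 1) * z ^ (k + 1))
            - ((∫ s, (g (k + 1)) s ∂μlim : ℝ) : ℂ) / (((k : ℂ) + 1) * z ^ (k + 1)))‖ :=
        norm_sub_le _ _
    _ ≤ (‖A‖ + ‖B‖) + D n := add_le_add ((norm_sub_le _ _)) hsumb
    _ < ε / 4 + ε / 4 + ε / 2 := by
        have := hn
        linarith [hAb, hBb, hN]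
    _ = ε := by ring
end

section
/- Let $\mu$ be a probability measure on $[0,b]$ with density $\frac{1}{2\pi}\sqrt{\frac{b-x}{x}}\,h(x)$, $h$ a polynomial positive on $[0,b]$, and let $u_\epsilon < 0$ be the unique negative solution of $\int \frac{d\mu(x)}{(x-u)^2} = \epsilon^{-2}$. Then there exists $\kappa > 0$ such that $u_\epsilon = -\kappa\,\epsilon^{4/3}(1 + o(1))$ as $\epsilon \to 0$. -/
open MeasureTheory Filter Set Real Topology

lemma key (b : ℝ) (hb : 0 < b) (h : Polynomial ℝ)
    (hpos : ∀ x ∈ Set.Icc 0 b, 0 < h.eval x) :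
    ∃ C : ℝ, 0 < C ∧ Tendsto (fun t : ℝ => t ^ ((3:ℝ)/2) *
      ∫ x : ℝ, Set.indicator (Set.Ioo 0 b)
        (fun x => 1 / (2 * Real.pi) * Real.sqrt ((b - x) / x) * h.eval x * ((x + t) ^ 2)⁻¹) x)
      (𝓝[>] 0) (𝓝 C) := by
  -- bound on h
  obtain ⟨x₀, hx₀, hM⟩ := isCompact_Icc.exists_isMaxOn (Set.nonempty_Icc.2 hb.le)
    h.continuous.continuousOn
  set M := h.eval x₀ with hMdef
  have hM0 : 0 < M := hpos x₀ hx₀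
  -- the dominating function
  set ψ : ℝ → ℝ := Set.indicator (Set.Ioi 0)
    (fun y => 1 / (2 * Real.pi) * (Real.sqrt b / Real.sqrt y) * M * ((y + 1) ^ 2)⁻¹) with hψdef
  have hψnonneg : ∀ y, 0 ≤ ψ y := by
    intro y
    apply Set.indicator_nonneg
    intro y _
    have := Real.pi_pos
    positivity
  have hinnermeas : Measurable fun y : ℝ =>
      1 / (2 * Real.pi) * (Real.sqrt b / Real.sqrt y) * M * ((y + 1) ^ 2)⁻¹ :=
    ((((measurable_const.div (measurable_id.sqrt)).const_mul _).mul measurable_const).mul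
      (((measurable_id.add_const 1).pow_const 2).inv))
  have hψmeas : Measurable ψ := hinnermeas.indicator measurableSet_Ioi
  have hψint : Integrable ψ := by
    rw [hψdef, integrable_indicator_iff measurableSet_Ioi,
      ← Ioc_union_Ioi_eq_Ioi (zero_le_one (α := ℝ)), integrableOn_union]
    constructor
    · have hint : IntegrableOn (fun y : ℝ => y ^ (-(1:ℝ)/2)) (Ioc 0 1) := by
        have := intervalIntegral.intervalIntegrable_rpow' (r := -(1:ℝ)/2) (a := 0) (b := 1)
          (by norm_num)
        rwa [intervalIntegrable_iff_integrableOn_Ioc_of_le zero_le_one] at this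
      refine Integrable.mono' (hint.const_mul (1 / (2 * Real.pi) * Real.sqrt b * M))
        hinnermeas.aestronglyMeasurable ?_
      rw [ae_restrict_iff' measurableSet_Ioc]
      filter_upwards with y hy
      have hy0 : 0 < y := hy.1
      have hsq : (Real.sqrt y)⁻¹ = y ^ (-(1:ℝ)/2) := by
        rw [Real.sqrt_eq_rpow, ← Real.rpow_neg hy0.le]
        norm_num
      have h1 : ((y + 1) ^ 2)⁻¹ ≤ 1 := by
        rw [inv_le_one_iff₀]
        right; nlinarith
      have hpi := Real.pi_pos
      rw [Real.norm_eq_abs, abs_of_nonneg (by positivity)]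
      calc 1 / (2 * Real.pi) * (Real.sqrt b / Real.sqrt y) * M * ((y + 1) ^ 2)⁻¹
          ≤ 1 / (2 * Real.pi) * (Real.sqrt b / Real.sqrt y) * M * 1 := by
            apply mul_le_mul_of_nonneg_left h1; positivity
        _ = 1 / (2 * Real.pi) * Real.sqrt b * M * y ^ (-(1:ℝ)/2) := by
            rw [div_eq_mul_inv (Real.sqrt b), hsq]; ring
    · have hint : IntegrableOn (fun y : ℝ => y ^ (-2:ℝ)) (Ioi 1) :=
        integrableOn_Ioi_rpow_of_lt (by norm_num) one_pos
      refine Integrable.mono' (hint.const_mul (1 / (2 * Real.pi) * Real.sqrt b * M))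
        hinnermeas.aestronglyMeasurable ?_
      rw [ae_restrict_iff' measurableSet_Ioi]
      filter_upwards with y hy
      have hy1 : (1:ℝ) ≤ y := hy.le
      have hy0 : 0 < y := lt_of_lt_of_le one_pos hy1
      have hs1 : (Real.sqrt y)⁻¹ ≤ 1 := by
        rw [inv_le_one_iff₀]; right
        rw [show (1:ℝ) = Real.sqrt 1 by simp]
        exact Real.sqrt_le_sqrt hy1
      have h2 : ((y + 1) ^ 2)⁻¹ ≤ y ^ (-2:ℝ) := by
        rw [Real.rpow_neg hy0.le, Real.rpow_two]
        apply inv_anti₀ (by positivity)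
        nlinarith
      have hpi := Real.pi_pos
      rw [Real.norm_eq_abs, abs_of_nonneg (by positivity)]
      calc 1 / (2 * Real.pi) * (Real.sqrt b / Real.sqrt y) * M * ((y + 1) ^ 2)⁻¹
          ≤ 1 / (2 * Real.pi) * Real.sqrt b * M * ((y + 1) ^ 2)⁻¹ := by
            apply mul_le_mul_of_nonneg_right _ (by positivity)
            rw [div_eq_mul_inv (Real.sqrt b)]
            have : Real.sqrt b * (Real.sqrt y)⁻¹ ≤ Real.sqrt b * 1 :=
              mul_le_mul_of_nonneg_left hs1 (Real.sqrt_nonneg b)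
            calc 1 / (2 * Real.pi) * (Real.sqrt b * (Real.sqrt y)⁻¹) * M
                ≤ 1 / (2 * Real.pi) * (Real.sqrt b * 1) * M := by
                  apply mul_le_mul_of_nonneg_right _ hM0.le
                  exact mul_le_mul_of_nonneg_left this (by positivity)
              _ = 1 / (2 * Real.pi) * Real.sqrt b * M := by ring
        _ ≤ 1 / (2 * Real.pi) * Real.sqrt b * M * y ^ (-2:ℝ) :=
            mul_le_mul_of_nonneg_left h2 (by positivity)
  -- limit function
  set L : ℝ → ℝ := Set.indicator (Set.Ioi 0)
    (fun y => 1 / (2 * Real.pi) * Real.sqrt (b / y) * h.eval 0 * ((y + 1) ^ 2)⁻¹) with hLdef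
  have hLinnermeas : Measurable fun y : ℝ =>
      1 / (2 * Real.pi) * Real.sqrt (b / y) * h.eval 0 * ((y + 1) ^ 2)⁻¹ :=
    ((((measurable_const.div measurable_id).sqrt.const_mul _).mul measurable_const).mul
      (((measurable_id.add_const 1).pow_const 2).inv))
  have hLmeas : Measurable L := hLinnermeas.indicator measurableSet_Ioi
  have hLle : ∀ y, L y ≤ ψ y := by
    intro y
    rw [hLdef, hψdef]
    by_cases hy : y ∈ Set.Ioi (0:ℝ)
    · rw [Set.indicator_of_mem hy, Set.indicator_of_mem hy]
      have hy0 : (0:ℝ) < y := hy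
      rw [Real.sqrt_div hb.le]
      have hpi := Real.pi_pos
      have hh0 : h.eval 0 ≤ M := hM ⟨le_rfl, hb.le⟩
      apply mul_le_mul_of_nonneg_right _ (by positivity)
      exact mul_le_mul_of_nonneg_left hh0 (by positivity)
    · rw [Set.indicator_of_notMem hy, Set.indicator_of_notMem hy]
  have hLnonneg : ∀ y, 0 ≤ L y := by
    intro y
    apply Set.indicator_nonneg
    intro y hy
    have hpi := Real.pi_pos
    have := hpos 0 ⟨le_rfl, hb.le⟩
    positivity
  have hLint : Integrable L := by
    refine hψint.mono' hLmeas.aestronglyMeasurable ?_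
    filter_upwards with y
    rw [Real.norm_eq_abs, abs_of_nonneg (hLnonneg y)]
    exact hLle y
  set C : ℝ := ∫ y, L y with hCdef
  have hC : 0 < C := by
    rw [hCdef, integral_pos_iff_support_of_nonneg hLnonneg hLint]
    have hsub : Set.Ioi (0:ℝ) ⊆ Function.support L := by
      intro y hy
      have hy0 : (0:ℝ) < y := hy
      rw [hLdef, Function.mem_support, Set.indicator_of_mem hy]
      have hpi := Real.pi_pos
      have hb' : 0 < b / y := div_pos hb hy0
      have hs : 0 < Real.sqrt (b / y) := Real.sqrt_pos.2 hb'
      have hh := hpos 0 ⟨le_rfl, hb.le⟩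
      positivity
    calc (0:ENNReal) < volume (Set.Ioi (0:ℝ)) := by simp [Real.volume_Ioi]
      _ ≤ volume (Function.support L) := measure_mono hsub
  refine ⟨C, hC, ?_⟩
  -- the substituted integrand
  set g : ℝ → ℝ → ℝ := fun t => Set.indicator (Set.Ioo 0 (b / t))
    (fun y => 1 / (2 * Real.pi) * Real.sqrt ((b - t * y) / y) * h.eval (t * y)
      * ((y + 1) ^ 2)⁻¹) with hgdef
  -- dominated convergence
  have hDCT : Tendsto (fun t => ∫ y, g t y) (𝓝[>] 0) (𝓝 C) := by
    rw [hCdef]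
    apply tendsto_integral_filter_of_dominated_convergence ψ
    · filter_upwards with t
      exact ((((((measurable_const.sub (measurable_id.const_mul t)).div
        measurable_id).sqrt.const_mul _).mul
        ((h.continuous.measurable).comp (measurable_id.const_mul t))).mul
        (((measurable_id.add_const 1).pow_const 2).inv)).indicator
        measurableSet_Ioo).aestronglyMeasurable
    · filter_upwards [self_mem_nhdsWithin] with t ht
      filter_upwards with y
      show ‖g t y‖ ≤ ψ y
      simp only [hgdef]
      by_cases hy : y ∈ Set.Ioo 0 (b / t)
      · have hy0 : (0:ℝ) < y := hy.1
        have hty : t * y < b := by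
          have := hy.2
          rwa [lt_div_iff₀' ht] at this
        have hty0 : 0 ≤ t * y := (mul_pos (Set.mem_Ioi.mp ht) hy0).le
        rw [Set.indicator_of_mem hy, hψdef, Set.indicator_of_mem (Set.mem_Ioi.mpr hy0)]
        have hpi := Real.pi_pos
        have hhval : 0 < h.eval (t * y) := hpos _ ⟨hty0, hty.le⟩
        rw [Real.norm_eq_abs, abs_of_nonneg (by positivity)]
        have hsle : Real.sqrt ((b - t * y) / y) ≤ Real.sqrt b / Real.sqrt y := by
          rw [← Real.sqrt_div hb.le]
          apply Real.sqrt_le_sqrt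
          gcongr
          nlinarith [mul_pos ht hy0]
        have hhle : h.eval (t * y) ≤ M := hM ⟨hty0, hty.le⟩
        apply mul_le_mul_of_nonneg_right _ (by positivity)
        calc 1 / (2 * Real.pi) * Real.sqrt ((b - t * y) / y) * h.eval (t * y)
            ≤ 1 / (2 * Real.pi) * (Real.sqrt b / Real.sqrt y) * h.eval (t * y) :=
              mul_le_mul_of_nonneg_right
                (mul_le_mul_of_nonneg_left hsle (by positivity)) hhval.le
          _ ≤ 1 / (2 * Real.pi) * (Real.sqrt b / Real.sqrt y) * M :=
              mul_le_mul_of_nonneg_left hhle (by positivity)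
      · rw [Set.indicator_of_notMem hy]
        simpa using hψnonneg y
    · exact hψint
    · filter_upwards with y
      rcases le_or_gt y 0 with hy | hy
      · have hz1 : ∀ t ∈ Set.Ioi (0:ℝ), g t y = 0 := by
          intro t ht
          show g t y = 0
          simp only [hgdef]
          rw [Set.indicator_of_notMem]
          intro hmem
          exact absurd hmem.1 (not_lt.2 hy)
        have hz2 : L y = 0 := by
          simp only [hLdef]
          rw [Set.indicator_of_notMem (by simpa using hy)]
        rw [hz2]
        apply Tendsto.congr' _ tendsto_const_nhds
        filter_upwards [self_mem_nhdsWithin] with t ht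
        exact (hz1 t ht).symm
      · have hLy : L y = 1 / (2 * Real.pi) * Real.sqrt (b / y) * h.eval 0 * ((y + 1) ^ 2)⁻¹ := by
          simp only [hLdef]
          rw [Set.indicator_of_mem (Set.mem_Ioi.mpr hy)]
        rw [hLy]
        have hcont : Tendsto (fun t : ℝ => 1 / (2 * Real.pi) * Real.sqrt ((b - t * y) / y)
            * h.eval (t * y) * ((y + 1) ^ 2)⁻¹) (𝓝 0)
            (𝓝 (1 / (2 * Real.pi) * Real.sqrt (b / y) * h.eval 0 * ((y + 1) ^ 2)⁻¹)) := by
          have : Continuous fun t : ℝ => 1 / (2 * Real.pi) * Real.sqrt ((b - t * y) / y)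
              * h.eval (t * y) * ((y + 1) ^ 2)⁻¹ := by
            apply Continuous.mul _ continuous_const
            apply Continuous.mul
            · exact continuous_const.mul
                (((continuous_const.sub (continuous_id.mul continuous_const)).div_const y).sqrt)
            · exact h.continuous.comp (continuous_id.mul continuous_const)
          have h0 := this.tendsto 0
          simpa using h0
        apply Tendsto.congr' _ (hcont.mono_left nhdsWithin_le_nhds)
        filter_upwards [Ioo_mem_nhdsGT_of_mem (Set.left_mem_Ico.2 (div_pos hb hy))] with t ht
        show _ = g t y
        simp only [hgdef]
        rw [Set.indicator_of_mem]
        refine ⟨hy, ?_⟩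
        rw [lt_div_iff₀' ht.1]
        exact (lt_div_iff₀ hy).mp ht.2
  -- change of variables x = t * y
  apply hDCT.congr'
  filter_upwards [self_mem_nhdsWithin] with t ht
  have ht0 : (0:ℝ) < t := ht
  have ht0' : t ≠ 0 := ht0.ne'
  set F : ℝ → ℝ := fun x => Set.indicator (Set.Ioo 0 b)
    (fun x => 1 / (2 * Real.pi) * Real.sqrt ((b - x) / x) * h.eval x * ((x + t) ^ 2)⁻¹) x
    with hFdef
  have hsub := Measure.integral_comp_mul_left F t
  rw [abs_inv, abs_of_pos ht0] at hsub
  have h2 : (∫ x, F x) = t * ∫ x, F (t * x) := by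
    rw [hsub, smul_eq_mul, ← mul_assoc, mul_inv_cancel₀ ht0', one_mul]
  show (∫ y, g t y) = t ^ ((3:ℝ)/2) * ∫ x, F x
  rw [h2, ← mul_assoc, ← MeasureTheory.integral_const_mul]
  apply integral_congr_ae
  filter_upwards with y
  show g t y = (t ^ ((3:ℝ)/2) * t) * F (t * y)
  have e0 : t ^ ((3:ℝ)/2) = Real.sqrt t * t := by
    rw [show (3:ℝ)/2 = 1/2 + 1 by norm_num, Real.rpow_add ht0, Real.rpow_one,
      ← Real.sqrt_eq_rpow]
  have hst : Real.sqrt t ≠ 0 := (Real.sqrt_pos.2 ht0).ne'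
  by_cases hy : y ∈ Set.Ioo 0 (b / t)
  · have hy0 : (0:ℝ) < y := hy.1
    have hty : t * y ∈ Set.Ioo 0 b := ⟨mul_pos ht0 hy0, (lt_div_iff₀' ht0).mp hy.2⟩
    simp only [hgdef, hFdef]
    rw [Set.indicator_of_mem hy, Set.indicator_of_mem hty]
    have e1 : Real.sqrt ((b - t * y) / (t * y)) =
        Real.sqrt ((b - t * y) / y) / Real.sqrt t := by
      have e1a : (b - t * y) / (t * y) = ((b - t * y) / y) / t := by
        rw [div_div, mul_comm]
      rw [e1a, Real.sqrt_div (div_nonneg (by nlinarith [hty.2]) hy0.le)]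
    have e2 : ((t * y + t) ^ 2)⁻¹ = ((y + 1) ^ 2)⁻¹ / t ^ 2 := by
      rw [show t * y + t = t * (y + 1) by ring, mul_pow, mul_inv, div_eq_mul_inv]
      ring
    rw [e1, e2, e0]
    field_simp
  · have hty : t * y ∉ Set.Ioo 0 b := by
      intro hmem
      apply hy
      refine ⟨?_, (lt_div_iff₀' ht0).mpr hmem.2⟩
      nlinarith [hmem.1]
    simp only [hgdef, hFdef]
    rw [Set.indicator_of_notMem hy, Set.indicator_of_notMem hty, mul_zero]


/-- If `u_ε < 0` is the unique negative solution of `∫ dμ(x)/(x-u)² = ε⁻²` for the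
Marchenko–Pastur type measure `μ`, then `u_ε = -κ ε^{4/3}(1+o(1))` as `ε → 0⁺`
for some `κ > 0`. -/
theorem stmt7 (b : ℝ) (hb : 0 < b) (h : Polynomial ℝ)
    (hpos : ∀ x ∈ Set.Icc 0 b, 0 < h.eval x)
    (μ : Measure ℝ)
    (hμ : μ = volume.withDensity fun x =>
      ENNReal.ofReal (Set.indicator (Set.Ioo 0 b)
        (fun x => (1 / (2 * Real.pi)) * Real.sqrt ((b - x) / x) * h.eval x) x))
    (hprob : IsProbabilityMeasure μ)
    (u : ℝ → ℝ)
    (hu : ∀ ε : ℝ, 0 < ε → u ε < 0 ∧ (∫ x, ((x - u ε) ^ 2)⁻¹ ∂μ) = (ε ^ 2)⁻¹) :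
    ∃ κ : ℝ, 0 < κ ∧
      Tendsto (fun ε : ℝ => u ε / (-κ * ε ^ ((4 : ℝ) / 3)))
        (nhdsWithin 0 (Set.Ioi 0)) (nhds 1) := by
  obtain ⟨C, hC, hkey⟩ := key b hb h hpos
  set ρ : ℝ → ℝ := fun x => Set.indicator (Set.Ioo 0 b)
    (fun x => (1 / (2 * Real.pi)) * Real.sqrt ((b - x) / x) * h.eval x) x with hρdef
  have hρmeas : Measurable ρ :=
    ((((measurable_const.sub measurable_id).div measurable_id).sqrt.const_mul _).mul
      h.continuous.measurable).indicator measurableSet_Ioo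
  have hρnonneg : ∀ x, 0 ≤ ρ x := by
    intro x
    apply Set.indicator_nonneg
    intro x hx
    have hpi := Real.pi_pos
    have h1 : 0 ≤ (b - x) / x := div_nonneg (by linarith [hx.2]) hx.1.le
    have h2 := hpos x ⟨hx.1.le, hx.2.le⟩
    positivity
  -- rewrite the μ-integral as a Lebesgue integral
  have hint : ∀ v : ℝ, (∫ x, ((x - v) ^ 2)⁻¹ ∂μ) =
      ∫ x, Set.indicator (Set.Ioo 0 b)
        (fun x => 1 / (2 * Real.pi) * Real.sqrt ((b - x) / x) * h.eval x
          * ((x + -v) ^ 2)⁻¹) x := by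
    intro v
    rw [hμ]
    rw [show (fun x => ENNReal.ofReal (ρ x)) = fun x => ((ρ x).toNNReal : ENNReal) from rfl]
    rw [integral_withDensity_eq_integral_smul hρmeas.real_toNNReal
      (fun x => ((x - v) ^ 2)⁻¹)]
    apply integral_congr_ae
    filter_upwards with x
    rw [NNReal.smul_def, smul_eq_mul, Real.coe_toNNReal _ (hρnonneg x)]
    by_cases hx : x ∈ Set.Ioo 0 b
    · rw [hρdef]
      simp only
      rw [Set.indicator_of_mem hx, Set.indicator_of_mem hx, ← sub_eq_add_neg]
    · rw [hρdef]
      simp only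
      rw [Set.indicator_of_notMem hx, Set.indicator_of_notMem hx, zero_mul]
  -- a.e. membership in (0, b)
  have hcompl : μ (Set.Ioo 0 b)ᶜ = 0 := by
    rw [hμ, withDensity_apply _ measurableSet_Ioo.compl]
    have hz : ∀ᵐ x ∂(volume.restrict (Set.Ioo 0 b)ᶜ), ENNReal.ofReal (ρ x) = 0 := by
      rw [ae_restrict_iff' measurableSet_Ioo.compl]
      filter_upwards with x hx
      rw [hρdef]
      simp only
      rw [Set.indicator_of_notMem hx, ENNReal.ofReal_zero]
    rw [lintegral_congr_ae hz, lintegral_zero]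
  have hae : ∀ᵐ x ∂μ, x ∈ Set.Ioo 0 b := by
    rw [ae_iff]
    exact hcompl
  -- |u ε| ≤ ε
  have hbound : ∀ ε : ℝ, 0 < ε → -u ε ≤ ε := by
    intro ε hε
    obtain ⟨hu1, hu2⟩ := hu ε hε
    have hune : u ε ≠ 0 := hu1.ne
    have hle : (∫ x, ((x - u ε) ^ 2)⁻¹ ∂μ) ≤ ((u ε) ^ 2)⁻¹ := by
      have hgle : ∀ᵐ x ∂μ, ((x - u ε) ^ 2)⁻¹ ≤ ((u ε) ^ 2)⁻¹ := by
        filter_upwards [hae] with x hx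
        apply inv_anti₀ (by positivity)
        nlinarith [hx.1]
      have := integral_mono_of_nonneg (f := fun x => ((x - u ε) ^ 2)⁻¹)
        (g := fun _ => ((u ε) ^ 2)⁻¹)
        (by filter_upwards [hae] with x hx; positivity) (integrable_const _) hgle
      simpa using this
    rw [hu2] at hle
    have h2 : (u ε) ^ 2 ≤ ε ^ 2 := by
      have h1 : (0:ℝ) < (u ε) ^ 2 := by positivity
      have h2' : (0:ℝ) < ε ^ 2 := by positivity
      exact (inv_le_inv₀ h2' h1).mp hle
    nlinarith [sq_nonneg (u ε + ε)]
  -- -u ε → 0 within Ioi 0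
  have htend0 : Tendsto (fun ε => -u ε) (𝓝[>] 0) (𝓝[>] 0) := by
    rw [tendsto_nhdsWithin_iff]
    constructor
    · apply tendsto_of_tendsto_of_tendsto_of_le_of_le' tendsto_const_nhds
        (tendsto_id.mono_left nhdsWithin_le_nhds)
      · filter_upwards [self_mem_nhdsWithin] with ε hε
        exact (neg_pos.mpr (hu ε hε).1).le
      · filter_upwards [self_mem_nhdsWithin] with ε hε
        exact hbound ε hε
    · filter_upwards [self_mem_nhdsWithin] with ε hε
      exact neg_pos.mpr (hu ε hε).1
  -- main convergence
  have hA : Tendsto (fun ε => (-u ε) ^ ((3:ℝ)/2) * (ε ^ 2)⁻¹) (𝓝[>] 0) (𝓝 C) := by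
    apply (hkey.comp htend0).congr'
    filter_upwards [self_mem_nhdsWithin] with ε hε
    simp only [Function.comp_apply]
    rw [← (hu ε hε).2, hint (u ε)]
  set κ : ℝ := C ^ ((2:ℝ)/3) with hκdef
  have hκ : 0 < κ := Real.rpow_pos_of_pos hC _
  refine ⟨κ, hκ, ?_⟩
  have hB : Tendsto (fun ε => (-u ε) / ε ^ ((4:ℝ)/3)) (𝓝[>] 0) (𝓝 κ) := by
    have hT := hA.rpow_const (p := (2:ℝ)/3) (Or.inl hC.ne')
    apply hT.congr'
    filter_upwards [self_mem_nhdsWithin] with ε hε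
    have hε0 : (0:ℝ) < ε := hε
    have hu1 := (hu ε hε).1
    have hneg : (0:ℝ) ≤ -u ε := (neg_pos.mpr hu1).le
    rw [Real.mul_rpow (Real.rpow_nonneg hneg _) (by positivity)]
    have eA : ((-u ε : ℝ) ^ ((3:ℝ)/2)) ^ ((2:ℝ)/3) = -u ε := by
      rw [← Real.rpow_mul hneg]
      norm_num
    have eB : ((ε ^ 2 : ℝ)⁻¹) ^ ((2:ℝ)/3) = (ε ^ ((4:ℝ)/3))⁻¹ := by
      rw [← Real.rpow_natCast ε 2, Real.inv_rpow (Real.rpow_nonneg hε0.le _),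
        ← Real.rpow_mul hε0.le]
      norm_num
    rw [eA, eB]
    exact (div_eq_mul_inv _ _).symm
  have hfin := hB.div_const κ
  rw [div_self hκ.ne'] at hfin
  apply hfin.congr'
  filter_upwards [self_mem_nhdsWithin] with ε hε
  rw [neg_mul, div_neg, ← neg_div, div_div, mul_comm]
end

section
/- There exists $C > 0$ such that for all $n \in \mathbb{N}$ and all $k \in \{0, 1, \dots, n-1\}$, $\frac{n^{-k-\frac{1}{2}}\,\Gamma(n + 1/2)}{\Gamma(k+1)\,\Gamma(n-k)} \le C$. -/
open Real

lemma gamma_half_le (n : ℕ) (hn : 1 ≤ n) :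
    Real.Gamma ((n : ℝ) + 1 / 2) ≤ Real.sqrt n * Real.Gamma n := by
  have hn0 : (0 : ℝ) < n := by exact_mod_cast hn
  have h := Real.convexOn_log_Gamma.2 (Set.mem_Ioi.2 hn0)
    (Set.mem_Ioi.2 (by linarith : (0:ℝ) < (n:ℝ) + 1))
    (by norm_num : (0:ℝ) ≤ 1/2) (by norm_num : (0:ℝ) ≤ 1/2) (by norm_num)
  simp only [Function.comp_apply, smul_eq_mul] at h
  rw [show (1/2:ℝ) * (n:ℝ) + (1/2:ℝ) * ((n:ℝ) + 1) = (n:ℝ) + 1/2 from by ring] at h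
  have hG1 : Real.Gamma ((n : ℝ) + 1) = n * Real.Gamma n := Real.Gamma_add_one (by positivity)
  have hGpos : 0 < Real.Gamma n := Real.Gamma_pos_of_pos hn0
  have hGpos2 : 0 < Real.Gamma ((n : ℝ) + 1/2) := Real.Gamma_pos_of_pos (by linarith)
  have hrhs : (1/2) * Real.log (Real.Gamma n) + (1/2) * Real.log (Real.Gamma ((n:ℝ)+1))
      = Real.log (Real.sqrt n * Real.Gamma n) := by
    rw [hG1, Real.log_mul hn0.ne' hGpos.ne',
      Real.log_mul (Real.sqrt_pos.2 hn0).ne' hGpos.ne', Real.log_sqrt hn0.le]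
    ring
  rw [hrhs] at h
  exact (Real.log_le_log_iff hGpos2 (by positivity)).mp h

/-- Uniform Stirling-type bound: there is `C > 0` such that for all `n` and `k < n`,
`n^{-k-1/2} Γ(n+1/2) / (Γ(k+1) Γ(n-k)) ≤ C`. -/
theorem stmt12 :
    ∃ C : ℝ, 0 < C ∧ ∀ n k : ℕ, k < n →
      (n : ℝ) ^ (-(k : ℝ) - 1 / 2) * Real.Gamma ((n : ℝ) + 1 / 2) /
          (Real.Gamma ((k : ℝ) + 1) * Real.Gamma ((n : ℝ) - (k : ℝ))) ≤ C := by
  refine ⟨1, one_pos, fun n k hkn => ?_⟩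
  have hn1 : 1 ≤ n := by omega
  have hn0 : (0 : ℝ) < n := by exact_mod_cast (by omega : 0 < n)
  have hk : k ≤ n - 1 := by omega
  -- Gamma values at naturals
  have hGk : Real.Gamma ((k : ℝ) + 1) = (Nat.factorial k : ℝ) := by
    exact_mod_cast Real.Gamma_nat_eq_factorial k
  have hGnk : Real.Gamma ((n : ℝ) - (k : ℝ)) = (Nat.factorial (n - 1 - k) : ℝ) := by
    have : (n : ℝ) - (k : ℝ) = ((n - 1 - k : ℕ) : ℝ) + 1 := by
      have : ((n - 1 - k : ℕ) : ℝ) = (n : ℝ) - (k : ℝ) - 1 := by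
        push_cast [Nat.cast_sub (by omega : k ≤ n - 1), Nat.cast_sub (by omega : 1 ≤ n)]
        ring
      rw [this]; ring
    rw [this]; exact_mod_cast Real.Gamma_nat_eq_factorial (n - 1 - k)
  have hGn : Real.Gamma (n : ℝ) = (Nat.factorial (n - 1) : ℝ) := by
    have : (n : ℝ) = ((n - 1 : ℕ) : ℝ) + 1 := by
      push_cast [Nat.cast_sub (by omega : 1 ≤ n)]; ring
    rw [this]; exact_mod_cast Real.Gamma_nat_eq_factorial (n - 1)
  have hfacN : Nat.factorial (n-1)
      = Nat.choose (n-1) k * (Nat.factorial k * Nat.factorial (n-1-k)) := by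
    rw [← Nat.choose_mul_factorial_mul_factorial hk, Nat.mul_assoc]
  have hfac : (Nat.factorial (n-1) : ℝ)
      = (Nat.choose (n-1) k : ℝ) * ((Nat.factorial k : ℝ) * (Nat.factorial (n-1-k) : ℝ)) := by
    exact_mod_cast congrArg (Nat.cast (R := ℝ)) hfacN
  have hden : (0:ℝ) < (Nat.factorial k : ℝ) * (Nat.factorial (n-1-k) : ℝ) := by positivity
  rw [hGk, hGnk]
  have hbound := gamma_half_le n hn1
  rw [hGn] at hbound
  have hpow : (0:ℝ) < (n:ℝ) ^ (-(k:ℝ) - 1/2) := Real.rpow_pos_of_pos hn0 _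
  calc (n : ℝ) ^ (-(k : ℝ) - 1 / 2) * Real.Gamma ((n : ℝ) + 1 / 2) /
          ((Nat.factorial k : ℝ) * (Nat.factorial (n-1-k) : ℝ))
      ≤ (n : ℝ) ^ (-(k : ℝ) - 1 / 2) * (Real.sqrt n * (Nat.factorial (n-1) : ℝ)) /
          ((Nat.factorial k : ℝ) * (Nat.factorial (n-1-k) : ℝ)) := by
        gcongr
    _ = (n : ℝ) ^ (-(k : ℝ) - 1 / 2) * Real.sqrt n * (Nat.choose (n-1) k : ℝ) := by
        rw [hfac]; field_simp
    _ ≤ (n : ℝ) ^ (-(k : ℝ) - 1 / 2) * Real.sqrt n * ((n : ℝ) ^ (k : ℕ)) := by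
        have hc : (Nat.choose (n-1) k : ℝ) ≤ (n : ℝ) ^ (k : ℕ) := by
          calc (Nat.choose (n-1) k : ℝ) ≤ (((n-1 : ℕ) ^ k : ℕ) : ℝ) := by
                exact_mod_cast Nat.choose_le_pow (n-1) k
            _ ≤ (n : ℝ) ^ (k : ℕ) := by
                push_cast
                gcongr
                exact_mod_cast Nat.sub_le n 1
        exact mul_le_mul_of_nonneg_left hc (by positivity)
    _ = 1 := by
        rw [Real.sqrt_eq_rpow, ← Real.rpow_natCast (n:ℝ) k, ← Real.rpow_add hn0,
          ← Real.rpow_add hn0]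
        norm_num
end
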